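/- Let p, q, r be any three subspaces of an n-dimensional complex inner product space. Then 2 · dim(α(p,q,r)) ≤ n, i.e., the dimension of the distributivity test formula evaluated at p, q, r is at most n/2. -/

import Mathlib

/-- The distributivity test formula `α(p,q,r) = (a ⊔ b) ⊓ (aᗮ ⊔ bᗮ)` where
`a = p ⊔ (q ⊓ r)` and `b = (p ⊔ q) ⊓ (p ⊔ r)`. -/
noncomputable def distribTest {E : Type*} [NormedAddCommGroup E] [InnerProductSpace ℂ E]
    (p q r : Submodule ℂ E) : Submodule ℂ E :=
  ((p ⊔ (q ⊓ r)) ⊔ ((p ⊔ q) ⊓ (p ⊔ r))) ⊓ ((p ⊔ (q ⊓ r))ᗮ ⊔ ((p ⊔ q) ⊓ (p ⊔ r))ᗮ)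

theorem two_mul_finrank_distribTest_le
    {E : Type*} [NormedAddCommGroup E] [InnerProductSpace ℂ E]
    [FiniteDimensional ℂ E] (n : ℕ) (hn : Module.finrank ℂ E = n)
    (p q r : Submodule ℂ E) :
    2 * Module.finrank ℂ (distribTest p q r) ≤ n := by
  have hab : (p ⊔ (q ⊓ r)) ≤ (p ⊔ q) ⊓ (p ⊔ r) :=
    le_inf (sup_le_sup_left inf_le_left p) (sup_le_sup_left inf_le_right p)
  have hα : distribTest p q r = (p ⊔ (q ⊓ r))ᗮ ⊓ ((p ⊔ q) ⊓ (p ⊔ r)) := by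
    rw [distribTest, sup_eq_right.mpr hab,
      sup_eq_left.mpr (Submodule.orthogonal_le hab), inf_comm]
  have hsplit : (p ⊔ (q ⊓ r)) ⊔ ((p ⊔ (q ⊓ r))ᗮ ⊓ ((p ⊔ q) ⊓ (p ⊔ r)))
      = (p ⊔ q) ⊓ (p ⊔ r) := Submodule.sup_orthogonal_inf_of_hasOrthogonalProjection hab
  have hdisj : (p ⊔ (q ⊓ r)) ⊓ ((p ⊔ (q ⊓ r))ᗮ ⊓ ((p ⊔ q) ⊓ (p ⊔ r))) = ⊥ := by
    rw [← inf_assoc]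
    simp [(p ⊔ (q ⊓ r)).orthogonal_disjoint.eq_bot]
  have E8 : Module.finrank ℂ ↥((p ⊔ q) ⊓ (p ⊔ r)) =
      Module.finrank ℂ ↥(p ⊔ (q ⊓ r)) +
        Module.finrank ℂ ↥((p ⊔ (q ⊓ r))ᗮ ⊓ ((p ⊔ q) ⊓ (p ⊔ r))) := by
    have := Submodule.finrank_sup_add_finrank_inf_eq (p ⊔ (q ⊓ r))
      ((p ⊔ (q ⊓ r))ᗮ ⊓ ((p ⊔ q) ⊓ (p ⊔ r)))
    rw [hsplit, hdisj] at this
    simpa using this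
  have E1 := Submodule.finrank_sup_add_finrank_inf_eq p q
  have E2 := Submodule.finrank_sup_add_finrank_inf_eq p r
  have E3 := Submodule.finrank_sup_add_finrank_inf_eq q r
  have E4 := Submodule.finrank_sup_add_finrank_inf_eq (p ⊔ q) (p ⊔ r)
  have E5 := Submodule.finrank_sup_add_finrank_inf_eq p (q ⊓ r)
  have E6 := Submodule.finrank_sup_add_finrank_inf_eq p (q ⊔ r)
  have E7 := Submodule.finrank_sup_add_finrank_inf_eq (p ⊓ q) (p ⊓ r)
  have h1 : (p ⊔ q) ⊔ (p ⊔ r) = p ⊔ (q ⊔ r) := by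
    rw [sup_sup_sup_comm, sup_idem]
  have h2 : (p ⊓ q) ⊓ (p ⊓ r) = p ⊓ (q ⊓ r) := by
    rw [inf_assoc, inf_left_comm q, ← inf_assoc, inf_idem]
  rw [h1] at E4
  rw [h2] at E7
  have I1 : Module.finrank ℂ ↥(p ⊓ (q ⊔ r)) ≤ Module.finrank ℂ ↥p :=
    Submodule.finrank_mono inf_le_left
  have I2 : Module.finrank ℂ ↥p ≤ Module.finrank ℂ ↥(p ⊔ (q ⊓ r)) :=
    Submodule.finrank_mono le_sup_left
  have I3 : Module.finrank ℂ ↥((p ⊔ q) ⊓ (p ⊔ r)) ≤ n :=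
    hn ▸ Submodule.finrank_le _
  rw [hα]
  omega
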